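/- arXiv:2103.05426 — 3 statements merged into one kernel-verified Lean document; each statement's English description precedes it below -/
import Mathlib

section
/- Let N: ℝ^n → ℝ^n have components N(x)_i = x^T Q_i x with Q_i symmetric. If E is symmetric positive definite and x^T E x ≤ α², then for each i, (N(x)_i)² ≤ α² · x^T (Q_i E⁻¹ Q_i) x; equivalently, the pair (x, z) with z = N(x) satisfies the quadratic constraint x^T (α² Q_i E⁻¹ Q_i) x − z^T e_i e_i^T z ≥ 0. -/
open Matrix

lemma cs_psd {n : ℕ} (M : Matrix (Fin n) (Fin n) ℝ) (hM : M.PosSemidef)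
    (x y : Fin n → ℝ) :
    (x ⬝ᵥ (M *ᵥ y)) ^ 2 ≤ (x ⬝ᵥ (M *ᵥ x)) * (y ⬝ᵥ (M *ᵥ y)) := by
  have hMt : Mᵀ = M := by
    ext a b; simpa using congrFun (congrFun hM.1 a) b
  have hsymm : ∀ u v : Fin n → ℝ, u ⬝ᵥ (M *ᵥ v) = v ⬝ᵥ (M *ᵥ u) := by
    intro u v
    rw [dotProduct_mulVec, ← mulVec_transpose, hMt, dotProduct_comm]
  have key : ∀ t : ℝ, 0 ≤ (y ⬝ᵥ (M *ᵥ y)) * (t * t) +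
      (2 * (x ⬝ᵥ (M *ᵥ y))) * t + (x ⬝ᵥ (M *ᵥ x)) := by
    intro t
    have h0 := hM.dotProduct_mulVec_nonneg (x + t • y)
    simp only [star_trivial] at h0
    have : (x + t • y) ⬝ᵥ (M *ᵥ (x + t • y)) =
        (y ⬝ᵥ (M *ᵥ y)) * (t * t) + (2 * (x ⬝ᵥ (M *ᵥ y))) * t + (x ⬝ᵥ (M *ᵥ x)) := by
      simp only [mulVec_add, mulVec_smul, add_dotProduct, smul_dotProduct,
        dotProduct_add, dotProduct_smul, smul_eq_mul]
      rw [hsymm y x]; ring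
    linarith [this ▸ h0]
  have hd := discrim_le_zero key
  rw [discrim] at hd
  nlinarith [hd]

theorem local_qc_componentwise {n : ℕ} (Q : Fin n → Matrix (Fin n) (Fin n) ℝ)
    (hQ : ∀ i, (Q i).IsSymm) (E : Matrix (Fin n) (Fin n) ℝ) (hE : E.PosDef)
    (α : ℝ) (hα : 0 < α)
    (N : (Fin n → ℝ) → (Fin n → ℝ))
    (hN : ∀ x i, N x i = x ⬝ᵥ ((Q i) *ᵥ x))
    (x : Fin n → ℝ) (hx : x ⬝ᵥ (E *ᵥ x) ≤ α ^ 2) :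
    ∀ i, (N x i) ^ 2 ≤ α ^ 2 * (x ⬝ᵥ ((Q i * E⁻¹ * Q i) *ᵥ x)) ∧
      0 ≤ x ⬝ᵥ ((α ^ 2 • (Q i * E⁻¹ * Q i)) *ᵥ x) -
          (N x) ⬝ᵥ ((vecMulVec (Pi.single i 1) (Pi.single i 1)) *ᵥ (N x)) := by
  intro i
  have hEinv : (E⁻¹).PosDef := hE.inv
  set y : Fin n → ℝ := (Q i) *ᵥ x with hy
  -- key identity: x ⬝ᵥ ((Q i * E⁻¹ * Q i) *ᵥ x) = y ⬝ᵥ (E⁻¹ *ᵥ y)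
  have hid : x ⬝ᵥ ((Q i * E⁻¹ * Q i) *ᵥ x) = y ⬝ᵥ (E⁻¹ *ᵥ y) := by
    rw [← mulVec_mulVec, ← mulVec_mulVec, dotProduct_mulVec, ← mulVec_transpose,
      (hQ i).eq, hy]
  -- Cauchy–Schwarz with E: (x ⬝ᵥ (E *ᵥ (E⁻¹ *ᵥ y)))² ≤ (x⬝ᵥE x)((E⁻¹y)ᵀ E (E⁻¹y))
  have hcs := cs_psd E hE.posSemidef x (E⁻¹ *ᵥ y)
  have hinv : E *ᵥ (E⁻¹ *ᵥ y) = y := by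
    rw [mulVec_mulVec, Matrix.mul_nonsing_inv E (isUnit_iff_ne_zero.mpr hE.det_pos.ne'), one_mulVec]
  rw [hinv] at hcs
  rw [dotProduct_comm (E⁻¹ *ᵥ y) y] at hcs
  have hynn : 0 ≤ y ⬝ᵥ (E⁻¹ *ᵥ y) := by
    simpa using hEinv.posSemidef.dotProduct_mulVec_nonneg y
  have hmain : (x ⬝ᵥ y) ^ 2 ≤ α ^ 2 * (y ⬝ᵥ (E⁻¹ *ᵥ y)) := by
    calc (x ⬝ᵥ y) ^ 2 ≤ (x ⬝ᵥ (E *ᵥ x)) * (y ⬝ᵥ (E⁻¹ *ᵥ y)) := hcs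
    _ ≤ α ^ 2 * (y ⬝ᵥ (E⁻¹ *ᵥ y)) := mul_le_mul_of_nonneg_right hx hynn
  have h1 : (N x i) ^ 2 ≤ α ^ 2 * (x ⬝ᵥ ((Q i * E⁻¹ * Q i) *ᵥ x)) := by
    rw [hN x i, hid]; exact hmain
  refine ⟨h1, ?_⟩
  have h2 : (N x) ⬝ᵥ ((vecMulVec (Pi.single i 1) (Pi.single i 1)) *ᵥ (N x)) =
      (N x i) ^ 2 := by
    simp only [mulVec, dotProduct, vecMulVec_apply, Pi.single_apply, mul_ite, mul_one,
      mul_zero, ite_mul, zero_mul, Finset.sum_ite_eq, Finset.mem_univ, if_true,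
      Finset.sum_ite_eq', Finset.mul_sum]
    simp [sq]
  rw [h2, smul_mulVec, dotProduct_smul, smul_eq_mul]
  linarith
end

section
/- Suppose the matrix inequality [A^T P + P A, P; P, 0] + ξ₀ M₀ + ∑_{i=1}^n ξ_i M_i(α,E) ⪯ [−εI, 0; 0, 0] holds, where M₀ = [0, I; I, 0] and M_i(α,E) = [α² Q_i E⁻¹ Q_i, 0; 0, −e_i e_i^T], with ξ_i ≥ 0 for i = 1,…,n and ε > 0. Then for every x with x^T E x ≤ α² and z = N(x) (where N(x)_i = x^T Q_i x and N is lossless), one has 2 x^T P (A x + z) ≤ −ε ‖x‖². -/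
open Matrix

private lemma dot_symm' {n : ℕ} {P : Matrix (Fin n) (Fin n) ℝ} (hP : P.IsSymm)
    (a b : Fin n → ℝ) : a ⬝ᵥ (P *ᵥ b) = b ⬝ᵥ (P *ᵥ a) := by
  rw [dotProduct_mulVec]
  have : a ᵥ* P = P *ᵥ a := by nth_rewrite 1 [← hP]; rw [vecMul_transpose]
  rw [this, dotProduct_comm]

private lemma sum_mulVec' {m ι : Type*} [Fintype m] (s : Finset ι)
    (W : ι → Matrix m m ℝ) (v : m → ℝ) :
    (∑ i ∈ s, W i) *ᵥ v = ∑ i ∈ s, W i *ᵥ v := by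
  induction s using Finset.cons_induction with
  | empty => simp
  | cons a s ha ih => simp [Finset.sum_cons, add_mulVec, ih]

private lemma cauchy_E' {n : ℕ} {E : Matrix (Fin n) (Fin n) ℝ} (hE : E.PosDef)
    (x y : Fin n → ℝ) :
    (x ⬝ᵥ y) ^ 2 ≤ (x ⬝ᵥ (E *ᵥ x)) * (y ⬝ᵥ (E⁻¹ *ᵥ y)) := by
  open scoped MatrixOrder in
  obtain ⟨S, hSsa, -, hSS⟩ := CFC.exists_sqrt_of_isSelfAdjoint_of_quasispectrumRestricts
    hE.posSemidef.isHermitian (QuasispectrumRestricts.nnreal_of_nonneg hE.posSemidef.nonneg)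
  have hSt : S.IsSymm := by
    rw [Matrix.IsSymm, ← conjTranspose_eq_transpose_of_trivial]
    exact hSsa
  have hSu : IsUnit S.det := by
    have hd : S.det * S.det = E.det := by rw [← det_mul, hSS]
    refine isUnit_iff_ne_zero.2 fun h => ?_
    rw [h, mul_zero] at hd
    exact hE.det_pos.ne' hd.symm
  have hStinv : (S⁻¹).IsSymm := by
    rw [Matrix.IsSymm, transpose_nonsing_inv, hSt.eq]
  have hinv : E⁻¹ = S⁻¹ * S⁻¹ := by rw [← hSS, Matrix.mul_inv_rev]
  have hxy : x ⬝ᵥ y = (S *ᵥ x) ⬝ᵥ (S⁻¹ *ᵥ y) := by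
    have h1 : S *ᵥ (S⁻¹ *ᵥ y) = y := by
      rw [mulVec_mulVec, Matrix.mul_nonsing_inv _ hSu, one_mulVec]
    calc x ⬝ᵥ y = x ⬝ᵥ (S *ᵥ (S⁻¹ *ᵥ y)) := by rw [h1]
    _ = (x ᵥ* S) ⬝ᵥ (S⁻¹ *ᵥ y) := dotProduct_mulVec _ _ _
    _ = (S *ᵥ x) ⬝ᵥ (S⁻¹ *ᵥ y) := by nth_rewrite 1 [← hSt.eq]; rw [vecMul_transpose]
  have hxx : (S *ᵥ x) ⬝ᵥ (S *ᵥ x) = x ⬝ᵥ (E *ᵥ x) := by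
    rw [dot_symm' hSt, mulVec_mulVec, hSS]
  have hyy : (S⁻¹ *ᵥ y) ⬝ᵥ (S⁻¹ *ᵥ y) = y ⬝ᵥ (E⁻¹ *ᵥ y) := by
    rw [dot_symm' hStinv, mulVec_mulVec, ← hinv]
  rw [hxy, ← hxx, ← hyy]
  have := Finset.sum_mul_sq_le_sq_mul_sq Finset.univ (S *ᵥ x) (S⁻¹ *ᵥ y)
  simpa [dotProduct, pow_two] using this

private lemma dotProduct_sum' {m ι : Type*} [Fintype m] (s : Finset ι)
    (v : m → ℝ) (w : ι → m → ℝ) :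
    v ⬝ᵥ (∑ i ∈ s, w i) = ∑ i ∈ s, v ⬝ᵥ w i := by
  induction s using Finset.cons_induction with
  | empty => simp
  | cons a s ha ih => simp [Finset.sum_cons, ih]
theorem lmi_implies_lyapunov_decrease {n : ℕ}
    (A P E : Matrix (Fin n) (Fin n) ℝ) (hP : P.IsSymm) (hE : E.PosDef)
    (Q : Fin n → Matrix (Fin n) (Fin n) ℝ) (hQ : ∀ i, (Q i).IsSymm)
    (N : (Fin n → ℝ) → (Fin n → ℝ))
    (hN : ∀ x i, N x i = x ⬝ᵥ ((Q i) *ᵥ x))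
    (hlossless : ∀ x : Fin n → ℝ, x ⬝ᵥ (N x) = 0)
    (α ε : ℝ) (hα : 0 < α) (hε : 0 < ε)
    (ξ₀ : ℝ) (ξ : Fin n → ℝ) (hξ : ∀ i, 0 ≤ ξ i)
    (M₀ : Matrix ((Fin n) ⊕ (Fin n)) ((Fin n) ⊕ (Fin n)) ℝ)
    (hM₀ : M₀ = fromBlocks 0 1 1 0)
    (M : Fin n → Matrix ((Fin n) ⊕ (Fin n)) ((Fin n) ⊕ (Fin n)) ℝ)
    (hM : ∀ i, M i = fromBlocks (α ^ 2 • (Q i * E⁻¹ * Q i)) 0 0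
        (-(vecMulVec (Pi.single i 1) (Pi.single i 1))))
    (hLMI : (fromBlocks (-(ε • (1 : Matrix (Fin n) (Fin n) ℝ))) 0 0 0 -
        (fromBlocks (Aᵀ * P + P * A) P P 0 + ξ₀ • M₀ + ∑ i, ξ i • M i)).PosSemidef) :
    ∀ x : Fin n → ℝ, x ⬝ᵥ (E *ᵥ x) ≤ α ^ 2 →
      2 * (x ⬝ᵥ (P *ᵥ (A *ᵥ x + N x))) ≤ -ε * (x ⬝ᵥ x) := by
  intro x hx
  set z : Fin n → ℝ := N x with hz
  set v : (Fin n ⊕ Fin n) → ℝ := Sum.elim x z with hv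
  have h0 := hLMI.dotProduct_mulVec_nonneg v
  rw [star_trivial, sub_mulVec, dotProduct_sub, sub_nonneg] at h0
  -- RHS of h0
  have hD : v ⬝ᵥ ((fromBlocks (-(ε • (1 : Matrix (Fin n) (Fin n) ℝ))) 0 0 0) *ᵥ v)
      = -ε * (x ⬝ᵥ x) := by
    rw [hv, fromBlocks_mulVec, sumElim_dotProduct_sumElim]
    simp only [Sum.elim_comp_inl, Sum.elim_comp_inr, zero_mulVec, add_zero, zero_add,
      neg_mulVec, dotProduct_neg, smul_mulVec, dotProduct_smul, one_mulVec,
      dotProduct_zero, smul_eq_mul]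
    ring
  -- the P-block term
  have hF : v ⬝ᵥ ((fromBlocks (Aᵀ * P + P * A) P P 0) *ᵥ v)
      = 2 * (x ⬝ᵥ (P *ᵥ (A *ᵥ x))) + 2 * (x ⬝ᵥ (P *ᵥ z)) := by
    rw [hv, fromBlocks_mulVec, Sum.elim_comp_inl, Sum.elim_comp_inr, sumElim_dotProduct_sumElim]
    rw [add_mulVec, dotProduct_add, dotProduct_add, zero_mulVec, add_zero]
    have h1 : x ⬝ᵥ ((Aᵀ * P) *ᵥ x) = x ⬝ᵥ (P *ᵥ (A *ᵥ x)) := by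
      rw [← mulVec_mulVec, dotProduct_mulVec, vecMul_transpose]
      exact dot_symm' hP (A *ᵥ x) x
    have h2 : x ⬝ᵥ ((P * A) *ᵥ x) = x ⬝ᵥ (P *ᵥ (A *ᵥ x)) := by
      rw [← mulVec_mulVec]
    have h3 : z ⬝ᵥ (P *ᵥ x) = x ⬝ᵥ (P *ᵥ z) := dot_symm' hP z x
    rw [h1, h2, h3]; ring
  -- M₀ term
  have hM0v : v ⬝ᵥ (M₀ *ᵥ v) = 0 := by
    rw [hM₀, hv, fromBlocks_mulVec, Sum.elim_comp_inl, Sum.elim_comp_inr, sumElim_dotProduct_sumElim]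
    simp only [zero_mulVec, one_mulVec, add_zero, zero_add]
    rw [dotProduct_comm z x]
    have := hlossless x
    rw [← hz] at this
    linarith
  -- M i terms
  have hMiv : ∀ i, v ⬝ᵥ (M i *ᵥ v)
      = α ^ 2 * (x ⬝ᵥ ((Q i * E⁻¹ * Q i) *ᵥ x)) - (z i) ^ 2 := by
    intro i
    rw [hM i, hv, fromBlocks_mulVec, Sum.elim_comp_inl, Sum.elim_comp_inr, sumElim_dotProduct_sumElim]
    have houter : (vecMulVec (Pi.single i 1 : Fin n → ℝ) (Pi.single i 1)) *ᵥ z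
        = ((Pi.single i 1 : Fin n → ℝ) ⬝ᵥ z) • (Pi.single i 1 : Fin n → ℝ) := by
      ext j
      simp only [mulVec, vecMulVec_apply, Pi.smul_apply, smul_eq_mul, dotProduct]
      rw [Finset.sum_mul]
      exact Finset.sum_congr rfl fun k _ => by ring
    simp only [zero_mulVec, add_zero, zero_add, neg_mulVec, dotProduct_neg, houter,
      smul_mulVec, dotProduct_smul, single_dotProduct, dotProduct_single]
    rw [smul_eq_mul, smul_eq_mul]
    ring
  -- each ξ i term is nonneg
  have hterm : ∀ i, 0 ≤ ξ i * (α ^ 2 * (x ⬝ᵥ ((Q i * E⁻¹ * Q i) *ᵥ x)) - (z i) ^ 2) := by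
    intro i
    refine mul_nonneg (hξ i) ?_
    have hq : x ⬝ᵥ ((Q i * E⁻¹ * Q i) *ᵥ x)
        = (Q i *ᵥ x) ⬝ᵥ (E⁻¹ *ᵥ (Q i *ᵥ x)) := by
      rw [← mulVec_mulVec, ← mulVec_mulVec, dot_symm' (hQ i), mulVec_mulVec,
        ← mulVec_mulVec, dotProduct_comm]
    have hcs := cauchy_E' hE x (Q i *ᵥ x)
    have hnn : 0 ≤ (Q i *ᵥ x) ⬝ᵥ (E⁻¹ *ᵥ (Q i *ᵥ x)) := by
      have := hE.inv.posSemidef.dotProduct_mulVec_nonneg (Q i *ᵥ x)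
      rwa [star_trivial] at this
    have hzi : z i = x ⬝ᵥ (Q i *ᵥ x) := by rw [hz, hN]
    have h2 : (x ⬝ᵥ (E *ᵥ x)) * ((Q i *ᵥ x) ⬝ᵥ (E⁻¹ *ᵥ (Q i *ᵥ x)))
        ≤ α ^ 2 * ((Q i *ᵥ x) ⬝ᵥ (E⁻¹ *ᵥ (Q i *ᵥ x))) :=
      mul_le_mul_of_nonneg_right hx hnn
    rw [hzi, hq]
    nlinarith [hcs]
  -- expand the big quadratic form
  have hW : v ⬝ᵥ ((fromBlocks (Aᵀ * P + P * A) P P 0 + ξ₀ • M₀ + ∑ i, ξ i • M i) *ᵥ v)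
      = 2 * (x ⬝ᵥ (P *ᵥ (A *ᵥ x))) + 2 * (x ⬝ᵥ (P *ᵥ z))
        + ∑ i, ξ i * (α ^ 2 * (x ⬝ᵥ ((Q i * E⁻¹ * Q i) *ᵥ x)) - (z i) ^ 2) := by
    rw [add_mulVec, add_mulVec, dotProduct_add, dotProduct_add, hF,
      smul_mulVec, dotProduct_smul, hM0v, sum_mulVec', dotProduct_sum']
    simp only [smul_mulVec, dotProduct_smul, smul_eq_mul, mul_zero, add_zero]
    congr 1
    exact Finset.sum_congr rfl fun i _ => by rw [hMiv i]
  have hsum : 0 ≤ ∑ i, ξ i * (α ^ 2 * (x ⬝ᵥ ((Q i * E⁻¹ * Q i) *ᵥ x)) - (z i) ^ 2) :=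
    Finset.sum_nonneg fun i _ => hterm i
  rw [hW, hD] at h0
  have hgoal : 2 * (x ⬝ᵥ (P *ᵥ (A *ᵥ x + z)))
      = 2 * (x ⬝ᵥ (P *ᵥ (A *ᵥ x))) + 2 * (x ⬝ᵥ (P *ᵥ z)) := by
    rw [mulVec_add, dotProduct_add]; ring
  rw [hgoal]
  linarith
end

section
/- In the iterative refinement of Algorithm A, if (P⁽¹⁾, ξ⁽¹⁾, R⁽¹⁾) is feasible for the SDP constraints with local region parameters (E, α) = (E⁽¹⁾, α⁽¹⁾), then (P⁽¹⁾, ξ⁽¹⁾, R⁽¹⁾) remains feasible when the local region is updated to (E, α) = (P⁽¹⁾, 1). In particular, the constraint (1/α²)E ⪯ P holds with equality under this update; consequently the optimal radii satisfy R⁽²⁾ ≥ R⁽¹⁾. -/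
open Matrix

variable {n : ℕ}

lemma psd_smul {m : Type*} [Fintype m] {c : ℝ} {M : Matrix m m ℝ} (hc : 0 ≤ c) (hM : M.PosSemidef) :
    (c • M).PosSemidef := by
  refine ⟨by rw [IsHermitian, conjTranspose_smul, hM.1]; simp, fun x => ?_⟩
  exact (hM.smul hc).2 x

lemma pd_smul {c : ℝ} {M : Matrix (Fin n) (Fin n) ℝ} (hc : 0 < c) (hM : M.PosDef) :
    (c • M).PosDef := by
  refine ⟨by rw [IsHermitian, conjTranspose_smul, hM.1]; simp, fun x hx => ?_⟩
  exact (hM.smul hc).2 hx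

open scoped MatrixOrder in
/-- Inverse is antitone on positive definite matrices. -/
lemma inv_antitone {A B : Matrix (Fin n) (Fin n) ℝ} (hA : A.PosDef) (hB : B.PosDef)
    (h : (B - A).PosSemidef) : (A⁻¹ - B⁻¹).PosSemidef := by
  set S := CFC.sqrt B with hSdef
  have hS : S.PosSemidef := (CFC.sqrt_nonneg B).posSemidef
  have hSS : S * S = B := CFC.sqrt_mul_sqrt_self B hB.posSemidef.nonneg
  have hSdet : IsUnit S.det := by
    have hd : S.det * S.det = B.det := by rw [← det_mul, hSS]
    refine isUnit_iff_ne_zero.mpr fun h0 => ?_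
    rw [h0, mul_zero] at hd
    exact hB.det_pos.ne' hd.symm
  have hSinv : S * S⁻¹ = 1 := mul_nonsing_inv S hSdet
  have hinvS : S⁻¹ * S = 1 := nonsing_inv_mul S hSdet
  have hSih : (S⁻¹).IsHermitian := hS.1.inv
  set C := S⁻¹ * A * S⁻¹ with hCdef
  have hCpsd : C.PosSemidef := by
    have := hA.posSemidef.conjTranspose_mul_mul_same S⁻¹
    rwa [hSih.eq] at this
  have hCdet : IsUnit C.det := by
    have hc : C.det = S⁻¹.det * A.det * S⁻¹.det := by rw [hCdef, det_mul, det_mul]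
    have hSd : S.det ≠ 0 := fun h0 => by simp [h0] at hSdet
    have hAd : A.det ≠ 0 := hA.det_pos.ne'
    rw [hc, det_nonsing_inv, Ring.inverse_eq_inv]
    exact isUnit_iff_ne_zero.mpr (by positivity)
  have hCinv : C * C⁻¹ = 1 := mul_nonsing_inv C hCdet
  have hinvC : C⁻¹ * C = 1 := nonsing_inv_mul C hCdet
  -- 1 - C is psd
  have h1C : (1 - C).PosSemidef := by
    have key : S⁻¹ * (B - A) * S⁻¹ = 1 - C := by
      rw [mul_sub, sub_mul, hCdef]
      congr 1
      rw [← hSS]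
      calc S⁻¹ * (S * S) * S⁻¹ = (S⁻¹ * S) * (S * S⁻¹) := by
            simp only [mul_assoc]
        _ = 1 := by rw [hSinv, hinvS, one_mul]
    have := h.conjTranspose_mul_mul_same S⁻¹
    rwa [hSih.eq, key] at this
  -- D := sqrt of C⁻¹
  have hCipsd : (C⁻¹).PosSemidef := hCpsd.inv
  set D := CFC.sqrt C⁻¹ with hDdef
  have hD : D.PosSemidef := (CFC.sqrt_nonneg C⁻¹).posSemidef
  have hDD : D * D = C⁻¹ := CFC.sqrt_mul_sqrt_self C⁻¹ hCipsd.nonneg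
  have hcomm : C * D = D * C := by
    have h1 : D * C⁻¹ = C⁻¹ * D := by rw [← hDD, ← mul_assoc]
    calc C * D = C * D * (C⁻¹ * C) := by rw [hinvC, mul_one]
      _ = C * (D * C⁻¹) * C := by simp only [mul_assoc]
      _ = C * (C⁻¹ * D) * C := by rw [h1]
      _ = (C * C⁻¹) * (D * C) := by simp only [mul_assoc]
      _ = D * C := by rw [hCinv, one_mul]
  have hDCD : D * C * D = 1 := by
    calc D * C * D = (C * D) * D := by rw [hcomm]
      _ = C * (D * D) := by rw [mul_assoc]
      _ = 1 := by rw [hDD, hCinv]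
  have hCi1 : (C⁻¹ - 1).PosSemidef := by
    have key : D * (1 - C) * D = C⁻¹ - 1 := by
      rw [mul_sub, sub_mul, mul_one, hDD, hDCD]
    have := h1C.conjTranspose_mul_mul_same D
    rwa [hD.1.eq, key] at this
  -- conclude
  have hAeq : A = S * C * S := by
    rw [hCdef]
    calc A = (S * S⁻¹) * A * (S⁻¹ * S) := by rw [hSinv, hinvS, one_mul, mul_one]
      _ = S * (S⁻¹ * A * S⁻¹) * S := by simp only [mul_assoc]
  have hAinv : A⁻¹ = S⁻¹ * C⁻¹ * S⁻¹ := by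
    rw [hAeq, Matrix.mul_inv_rev, Matrix.mul_inv_rev, mul_assoc]
  have hBinv : B⁻¹ = S⁻¹ * S⁻¹ := by rw [← hSS, Matrix.mul_inv_rev]
  have key : S⁻¹ * (C⁻¹ - 1) * S⁻¹ = A⁻¹ - B⁻¹ := by
    rw [mul_sub, sub_mul, hAinv, hBinv, mul_one]
  have := hCi1.conjTranspose_mul_mul_same S⁻¹
  rwa [hSih.eq, key] at this

open scoped MatrixOrder in
lemma psd_fromBlocks {m : Type*} [Fintype m] [DecidableEq m] {C : Matrix m m ℝ} (hC : C.PosSemidef) :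
    (fromBlocks C 0 0 (0 : Matrix m m ℝ)).PosSemidef := by
  obtain ⟨B, hB⟩ : ∃ B : Matrix m m ℝ, C = Bᴴ * B := ⟨CFC.sqrt C, by
    rw [(CFC.sqrt_nonneg C).posSemidef.1.eq, CFC.sqrt_mul_sqrt_self C hC.nonneg]⟩
  have : fromBlocks C 0 0 (0 : Matrix m m ℝ)
      = (fromBlocks B 0 0 0)ᴴ * fromBlocks B 0 0 0 := by
    rw [fromBlocks_conjTranspose, fromBlocks_multiply]
    simp [hB]
  rw [this]
  exact posSemidef_conjTranspose_mul_self _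

/-- The SDP feasibility constraints of Theorem 1 (ROA estimation) for local region
parameters `(E, α)` and decision variables `(P, ξ₀, ξ, R)`. -/
def SDPFeasible {n : ℕ} (A : Matrix (Fin n) (Fin n) ℝ)
    (Q : Fin n → Matrix (Fin n) (Fin n) ℝ) (ε : ℝ)
    (E : Matrix (Fin n) (Fin n) ℝ) (α : ℝ)
    (P : Matrix (Fin n) (Fin n) ℝ) (ξ₀ : ℝ) (ξ : Fin n → ℝ) (R : ℝ) : Prop :=
  P.IsSymm ∧ 0 < R ∧ (∀ i, 0 ≤ ξ i) ∧
  (fromBlocks (-(ε • (1 : Matrix (Fin n) (Fin n) ℝ))) 0 0 0 -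
      (fromBlocks (Aᵀ * P + P * A) P P 0 +
        ξ₀ • (fromBlocks 0 1 1 0) +
        ∑ i, ξ i • fromBlocks (α ^ 2 • (Q i * E⁻¹ * Q i)) 0 0
          (-(vecMulVec (Pi.single i 1) (Pi.single i 1))))).PosSemidef ∧
  (P - (α ^ 2)⁻¹ • E).PosSemidef ∧
  ((R ^ 2)⁻¹ • (1 : Matrix (Fin n) (Fin n) ℝ) - P).PosSemidef

set_option maxHeartbeats 2000000 in
theorem refinement_feasibility_and_monotonicity {n : ℕ}
    (A : Matrix (Fin n) (Fin n) ℝ)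
    (Q : Fin n → Matrix (Fin n) (Fin n) ℝ) (hQ : ∀ i, (Q i).IsSymm) (ε : ℝ) (hε : 0 < ε)
    (E₁ : Matrix (Fin n) (Fin n) ℝ) (hE₁ : E₁.PosDef) (α₁ : ℝ) (hα₁ : 0 < α₁)
    (P₁ : Matrix (Fin n) (Fin n) ℝ) (hP₁ : P₁.PosDef)
    (ξ₀ : ℝ) (ξ : Fin n → ℝ) (R₁ : ℝ)
    (hfeas : SDPFeasible A Q ε E₁ α₁ P₁ ξ₀ ξ R₁) :
    SDPFeasible A Q ε P₁ 1 P₁ ξ₀ ξ R₁ ∧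
    P₁ - ((1 : ℝ) ^ 2)⁻¹ • P₁ = 0 ∧
    (∀ R₂ : ℝ,
      IsGreatest {R : ℝ | ∃ P ξ₀' ξ', SDPFeasible A Q ε P₁ 1 P ξ₀' ξ' R} R₂ →
      R₁ ≤ R₂) := by
  obtain ⟨hsym, hR, hξ, hbig, hloc, hRcon⟩ := hfeas
  have hα₂ : (0 : ℝ) < α₁ ^ 2 := by positivity
  have hA' : ((α₁ ^ 2)⁻¹ • E₁).PosDef := pd_smul (by positivity) hE₁
  have hAinv : ((α₁ ^ 2)⁻¹ • E₁)⁻¹ = α₁ ^ 2 • E₁⁻¹ := by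
    apply Matrix.inv_eq_left_inv
    rw [Matrix.smul_mul, Matrix.mul_smul, smul_smul, mul_inv_cancel₀ hα₂.ne',
      nonsing_inv_mul E₁ hE₁.det_pos.ne'.isUnit, one_smul]
  have hMdiff : (α₁ ^ 2 • E₁⁻¹ - P₁⁻¹).PosSemidef := by
    have := inv_antitone hA' hP₁ hloc
    rwa [hAinv] at this
  -- per-index inner psd matrices
  have hQH : ∀ i, (Q i)ᴴ = Q i := by
    intro i
    ext j k
    simp [conjTranspose_apply, (hQ i).apply]
  have hCi : ∀ i, (α₁ ^ 2 • (Q i * E₁⁻¹ * Q i) - (1 : ℝ) ^ 2 • (Q i * P₁⁻¹ * Q i)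
      = Q i * (α₁ ^ 2 • E₁⁻¹ - P₁⁻¹) * Q i) := by
    intro i
    rw [Matrix.mul_sub, Matrix.sub_mul, mul_smul_comm, smul_mul_assoc, one_pow, one_smul,
      mul_assoc, mul_assoc]
  have hCpsd : ∀ i, (α₁ ^ 2 • (Q i * E₁⁻¹ * Q i)
      - (1 : ℝ) ^ 2 • (Q i * P₁⁻¹ * Q i)).PosSemidef := by
    intro i
    rw [hCi i]
    have := hMdiff.conjTranspose_mul_mul_same (Q i)
    rwa [hQH i] at this
  -- the new big matrix equals the old one plus a psd correction
  have hfeas1 : SDPFeasible A Q ε P₁ 1 P₁ ξ₀ ξ R₁ := by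
    refine ⟨hsym, hR, hξ, ?_, ?_, hRcon⟩
    · have hsum : (∑ i, ξ i • fromBlocks (α₁ ^ 2 • (Q i * E₁⁻¹ * Q i)) 0 0
            (-(vecMulVec (Pi.single i 1) (Pi.single i 1))))
          = (∑ i, ξ i • fromBlocks ((1 : ℝ) ^ 2 • (Q i * P₁⁻¹ * Q i)) 0 0
            (-(vecMulVec (Pi.single i 1) (Pi.single i 1))))
          + ∑ i, ξ i • fromBlocks (α₁ ^ 2 • (Q i * E₁⁻¹ * Q i)
              - (1 : ℝ) ^ 2 • (Q i * P₁⁻¹ * Q i)) 0 0 0 := by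
        rw [← Finset.sum_add_distrib]
        refine Finset.sum_congr rfl fun i _ => ?_
        have hTL : (1 : ℝ) ^ 2 • (Q i * P₁⁻¹ * Q i) +
            (α₁ ^ 2 • (Q i * E₁⁻¹ * Q i) - (1 : ℝ) ^ 2 • (Q i * P₁⁻¹ * Q i))
            = α₁ ^ 2 • (Q i * E₁⁻¹ * Q i) := by abel
        rw [← smul_add, fromBlocks_add, hTL]
        simp only [add_zero, zero_add]
      have hD : (∑ i, ξ i • fromBlocks (α₁ ^ 2 • (Q i * E₁⁻¹ * Q i)
          - (1 : ℝ) ^ 2 • (Q i * P₁⁻¹ * Q i)) 0 0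
          (0 : Matrix (Fin n) (Fin n) ℝ)).PosSemidef := by
        apply Finset.sum_induction _ PosSemidef (fun a b ha hb => ha.add hb) PosSemidef.zero
        intro i _
        refine psd_smul (hξ i) ?_
        exact psd_fromBlocks (hCpsd i)
      have key : fromBlocks (-(ε • (1 : Matrix (Fin n) (Fin n) ℝ))) 0 0 0 -
          (fromBlocks (Aᵀ * P₁ + P₁ * A) P₁ P₁ 0 +
            ξ₀ • (fromBlocks 0 1 1 0) +
            ∑ i, ξ i • fromBlocks ((1 : ℝ) ^ 2 • (Q i * P₁⁻¹ * Q i)) 0 0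
              (-(vecMulVec (Pi.single i 1) (Pi.single i 1))))
          = (fromBlocks (-(ε • (1 : Matrix (Fin n) (Fin n) ℝ))) 0 0 0 -
            (fromBlocks (Aᵀ * P₁ + P₁ * A) P₁ P₁ 0 +
              ξ₀ • (fromBlocks 0 1 1 0) +
              ∑ i, ξ i • fromBlocks (α₁ ^ 2 • (Q i * E₁⁻¹ * Q i)) 0 0
                (-(vecMulVec (Pi.single i 1) (Pi.single i 1)))))
            + ∑ i, ξ i • fromBlocks (α₁ ^ 2 • (Q i * E₁⁻¹ * Q i)
                - (1 : ℝ) ^ 2 • (Q i * P₁⁻¹ * Q i)) 0 0 0 := by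
        rw [hsum]; abel
      rw [key]
      exact hbig.add hD
    · have : P₁ - ((1 : ℝ) ^ 2)⁻¹ • P₁ = 0 := by norm_num
      rw [this]
      exact PosSemidef.zero
  refine ⟨hfeas1, by norm_num, fun R₂ hR₂ => hR₂.2 ⟨P₁, ξ₀, ξ, hfeas1⟩⟩
end
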